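/- Let P be a register protocol with initial value d0 and target qf, and suppose Post*(↑{⟨q0, d0⟩}) = ↑{θ_1, …, θ_n} and Pre*([qf]) = ↑{η_1, …, η_m}. If Post*(↑{⟨q0, d0⟩}) is NOT included in Pre*([qf]) modulo single-state incrementation, then k* = max_{1 ≤ i ≤ n} |st(θ_i)| is a negative cut-off: for every h ≥ k*, there exists a configuration γ ∈ Post*({⟨q0^h, d0⟩}) with γ ∉ Pre*([qf]) (equivalently, qf is reached with probability strictly less than 1 in the system of h processes). -/

import Mathlib

/-- Operation type of a register protocol: read or write. -/
inductive Op : Type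
  | R : Op
  | W : Op
deriving DecidableEq

instance : Fintype Op := ⟨{Op.R, Op.W}, fun x => by cases x <;> simp⟩

/-- A location has at least one outgoing transition. -/
def Nonblock {Q D : Type*} (T : Set (Q × Op × D × Q)) : Prop :=
  ∀ q : Q, ∃ op d q', (q, op, d, q') ∈ T

/-- Whenever a read transition exists from `q`, reads of every datum are enabled in `q`. -/
def ReadTotal {Q D : Type*} (T : Set (Q × Op × D × Q)) : Prop :=
  ∀ q d' q', (q, Op.R, d', q') ∈ T → ∀ d : D, ∃ qd, (q, Op.R, d, qd) ∈ T

/-- One step of the distributed system associated with transition set `T`: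
a configuration is a pair of a finite multiset of locations and a register datum. -/
def IsStep {Q D : Type*} [DecidableEq Q] (T : Set (Q × Op × D × Q)) :
    Multiset Q × D → Multiset Q × D → Prop := fun γ γ' =>
  ∃ q op d'' q', (q, op, d'', q') ∈ T ∧ q ∈ γ.1 ∧
    γ'.1 = γ.1 - {q} + {q'} ∧
    ((op = Op.R ∧ γ.2 = d'' ∧ γ'.2 = d'') ∨ (op = Op.W ∧ γ'.2 = d''))

/-- Reachability: reflexive-transitive closure of the step relation. -/
def Reach {Q D : Type*} [DecidableEq Q] (T : Set (Q × Op × D × Q)) :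
    Multiset Q × D → Multiset Q × D → Prop :=
  Relation.ReflTransGen (IsStep T)

/-- `PostStar T S` is the set of configurations reachable from some configuration of `S`. -/
def PostStar {Q D : Type*} [DecidableEq Q] (T : Set (Q × Op × D × Q))
    (S : Set (Multiset Q × D)) : Set (Multiset Q × D) :=
  {γ' | ∃ γ ∈ S, Reach T γ γ'}

/-- `PreStar T S` is the set of configurations from which some configuration of `S`
is reachable. -/
def PreStar {Q D : Type*} [DecidableEq Q] (T : Set (Q × Op × D × Q))
    (S : Set (Multiset Q × D)) : Set (Multiset Q × D) :=
  {γ | ∃ γ' ∈ S, Reach T γ γ'}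

/-- `[qf]`: configurations containing at least one process in location `qf`. -/
def TargetSet {Q D : Type*} [DecidableEq Q] (qf : Q) : Set (Multiset Q × D) :=
  {γ | 0 < γ.1.count qf}

/-- The order `⪯` on configurations: same register content, same support,
and componentwise smaller multiset. -/
def ConfLE {Q D : Type*} [DecidableEq Q] (γ γ' : Multiset Q × D) : Prop :=
  γ.2 = γ'.2 ∧ γ.1.toFinset = γ'.1.toFinset ∧ γ.1 ≤ γ'.1

/-- Upward closure of a set of configurations with respect to `⪯`. -/
def UpSet {Q D : Type*} [DecidableEq Q] (B : Set (Multiset Q × D)) :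
    Set (Multiset Q × D) :=
  {γ' | ∃ γ ∈ B, ConfLE γ γ'}

/-- `Δ` is included in `Δ'` modulo single-state incrementation. -/
def IncModSSI {Q D : Type*} [DecidableEq Q] (Δ Δ' : Set (Multiset Q × D)) : Prop :=
  ∀ γ ∈ Δ, ∀ q ∈ γ.1.toFinset, ∃ k : ℕ, (γ.1 + Multiset.replicate k q, γ.2) ∈ Δ'

lemma confle_trans {Q D : Type*} [DecidableEq Q] {a b c : Multiset Q × D}
    (h1 : ConfLE a b) (h2 : ConfLE b c) : ConfLE a c :=
  ⟨h1.1.trans h2.1, h1.2.1.trans h2.2.1, h1.2.2.trans h2.2.2⟩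

lemma toFinset_add_replicate {Q : Type*} [DecidableEq Q] {μ : Multiset Q} {q : Q}
    (hq : q ∈ μ.toFinset) (k : ℕ) :
    (μ + Multiset.replicate k q).toFinset = μ.toFinset := by
  ext x
  simp only [Multiset.toFinset_add, Finset.mem_union, Multiset.mem_toFinset,
    Multiset.mem_replicate] at *
  constructor
  · rintro (h | ⟨-, rfl⟩)
    · exact h
    · exact hq
  · exact Or.inl

lemma step_card {Q D : Type*} [DecidableEq Q] {T : Set (Q × Op × D × Q)}
    {γ γ' : Multiset Q × D} (h : IsStep T γ γ') :
    Multiset.card γ'.1 = Multiset.card γ.1 := by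
  obtain ⟨q, op, d'', q', -, hq, heq, -⟩ := h
  have hpos : 0 < Multiset.card γ.1 := Multiset.card_pos_iff_exists_mem.mpr ⟨q, hq⟩
  rw [heq, Multiset.card_add, Multiset.card_sub (Multiset.singleton_le.mpr hq)]
  simp only [Multiset.card_singleton]
  omega

lemma reach_card {Q D : Type*} [DecidableEq Q] {T : Set (Q × Op × D × Q)}
    {γ γ' : Multiset Q × D} (h : Reach T γ γ') :
    Multiset.card γ'.1 = Multiset.card γ.1 := by
  induction h with
  | refl => rfl
  | tail _ hstep ih => rw [step_card hstep, ih]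

/-- if `Post*(↑{⟨q0,d0⟩}) = ↑{θ_1,…,θ_n}` is not included in
`Pre*([qf]) = ↑{η_1,…,η_m}` modulo single-state incrementation, then
`max_i |st(θ_i)|` is a negative cut-off. -/
theorem stmt_7 {Q D : Type*} [DecidableEq Q]
    (T : Set (Q × Op × D × Q)) (hnb : Nonblock T) (hrt : ReadTotal T)
    (q0 qf : Q) (d0 : D) (n m : ℕ)
    (θ : Fin n → Multiset Q × D) (η : Fin m → Multiset Q × D)
    (hpost : PostStar T (UpSet {(({q0} : Multiset Q), d0)}) = UpSet (Set.range θ))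
    (hpre : PreStar T (TargetSet qf) = UpSet (Set.range η))
    (hnot : ¬ IncModSSI (PostStar T (UpSet {(({q0} : Multiset Q), d0)}))
        (PreStar T (TargetSet qf))) :
    ∀ h : ℕ, (Finset.univ.sup fun i : Fin n => Multiset.card (θ i).1) ≤ h →
      ∃ γ ∈ PostStar T {(Multiset.replicate h q0, d0)},
        γ ∉ PreStar T (TargetSet qf) := by
  intro h hh
  -- extract the witness of non-inclusion
  simp only [IncModSSI, not_forall] at hnot
  obtain ⟨γ, hγpost, q, hq, hk⟩ := hnot
  -- γ is above some θ i
  have hγpost' := hγpost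
  rw [hpost] at hγpost'
  obtain ⟨_, ⟨i, rfl⟩, hle⟩ := hγpost'
  have hqθ : q ∈ (θ i).1.toFinset := by rw [hle.2.1]; exact hq
  set k := h - Multiset.card (θ i).1 with hkdef
  have hcard : Multiset.card (θ i).1 ≤ h :=
    le_trans (Finset.le_sup (f := fun i => Multiset.card (θ i).1) (Finset.mem_univ i)) hh
  set γ' : Multiset Q × D := ((θ i).1 + Multiset.replicate k q, (θ i).2) with hγ'
  -- γ' is not in Pre*
  have hγ'notpre : γ' ∉ PreStar T (TargetSet qf) := by
    intro hmem
    rw [hpre] at hmem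
    obtain ⟨ζ, hζ, hζle⟩ := hmem
    apply hk
    refine ⟨k, ?_⟩
    rw [hpre]
    refine ⟨ζ, hζ, confle_trans hζle ?_⟩
    refine ⟨hle.1, ?_, add_le_add_left hle.2.2 _⟩
    rw [toFinset_add_replicate hqθ, toFinset_add_replicate hq]
    exact hle.2.1
  -- γ' is in Post* of the upward closure
  have hγ'post : γ' ∈ PostStar T (UpSet {(({q0} : Multiset Q), d0)}) := by
    rw [hpost]
    exact ⟨θ i, ⟨i, rfl⟩, rfl, (toFinset_add_replicate hqθ k).symm,
      Multiset.le_add_right _ _⟩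
  obtain ⟨δ, hδ, hreach⟩ := hγ'post
  obtain ⟨_, rfl, hδle⟩ := hδ
  -- δ must be a multiset of copies of q0 with register d0
  have hδ2 : δ.2 = d0 := hδle.1.symm
  have hδ1 : δ.1 = Multiset.replicate (Multiset.card δ.1) q0 := by
    rw [Multiset.eq_replicate_card]
    intro b hb
    have : b ∈ δ.1.toFinset := Multiset.mem_toFinset.mpr hb
    rw [← hδle.2.1] at this
    simpa using this
  have hcd : Multiset.card δ.1 = h := by
    have := reach_card hreach
    rw [hγ'] at this
    simp only [Multiset.card_add, Multiset.card_replicate] at this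
    omega
  rw [hcd] at hδ1
  refine ⟨γ', ⟨(Multiset.replicate h q0, d0), rfl, ?_⟩, hγ'notpre⟩
  rw [← hδ2, ← hδ1]
  exact hreach
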